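/- arXiv:1302.3162 — 4 statements merged into one kernel-verified Lean document; each statement's English description precedes it below -/
import Mathlib

section
/- Let H be a real Hilbert space, let x : ℝ → H be continuously differentiable, let α : ℝ → ℝ be differentiable with α'(t) = −‖x'(t)‖² for all t, and let κ > 0 and s₀ ∈ ℝ. Assume α(t) > 0 and ‖x'(t)‖² ≥ κ·α(t) for all t ≥ s₀, that x(t) converges to a point x⁺ ∈ H as t → ∞, and that α(t) → 0 as t → ∞. Then for every s ≥ s₀ one has ‖x⁺ − x(s)‖ ≤ (2/√κ)·√(α(s)). -/
open Filter

/-- Along a curve with `α' = −‖x'‖²` and `‖x'‖² ≥ κ α`, the distance to the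
asymptotic limit is bounded by `(2/√κ)·√(α(s))`. -/
theorem distance_bound_by_sqrt_action
    {H : Type*} [NormedAddCommGroup H] [InnerProductSpace ℝ H] [CompleteSpace H]
    (x : ℝ → H) (hx : ContDiff ℝ 1 x)
    (α : ℝ → ℝ) (hα : Differentiable ℝ α)
    (hα' : ∀ t, deriv α t = -‖deriv x t‖ ^ 2)
    (κ : ℝ) (hκ : 0 < κ) (s₀ : ℝ)
    (hpos : ∀ t ≥ s₀, 0 < α t)
    (hae : ∀ t ≥ s₀, κ * α t ≤ ‖deriv x t‖ ^ 2)
    (xplus : H) (hconv : Tendsto x atTop (nhds xplus))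
    (hα0 : Tendsto α atTop (nhds 0)) :
    ∀ s ≥ s₀, ‖xplus - x s‖ ≤ (2 / Real.sqrt κ) * Real.sqrt (α s) := by
  intro s hs
  set c : ℝ := 2 / Real.sqrt κ with hc
  have hκs : (0:ℝ) < Real.sqrt κ := Real.sqrt_pos.mpr hκ
  have hxd : ∀ t, HasDerivAt x (deriv x t) t :=
    fun t => (hx.differentiable one_ne_zero t).hasDerivAt
  have hxc : Continuous (deriv x) := hx.continuous_deriv le_rfl
  -- key: for b ≥ s, ‖x b - x s‖ ≤ c√(α s) - c√(α b)
  have key : ∀ b ≥ s, ‖x b - x s‖ ≤ c * Real.sqrt (α s) - c * Real.sqrt (α b) := by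
    intro b hb
    set B : ℝ → ℝ := fun t => c * Real.sqrt (α s) - c * Real.sqrt (α t) with hB
    have hBcont : ContinuousOn B (Set.Icc s b) :=
      (continuousOn_const.sub ((continuous_const.mul
        (Real.continuous_sqrt.comp hα.continuous)).continuousOn))
    have hB' : ∀ t ∈ Set.Ico s b,
        HasDerivWithinAt B (‖deriv x t‖ ^ 2 / (Real.sqrt κ * Real.sqrt (α t)))
          (Set.Ici t) t := by
      intro t ht
      have hts : s₀ ≤ t := le_trans hs ht.1
      have hαt : 0 < α t := hpos t hts
      have hsq : HasDerivAt (fun u => Real.sqrt (α u))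
          (deriv α t / (2 * Real.sqrt (α t))) t := by
        have := (Real.hasDerivAt_sqrt (ne_of_gt hαt)).comp t (hα t).hasDerivAt
        simpa [div_eq_inv_mul, mul_comm, Function.comp_def] using this
      have hBd : HasDerivAt B (-(c * (deriv α t / (2 * Real.sqrt (α t))))) t := by
        have := (hasDerivAt_const t (c * Real.sqrt (α s))).sub (hsq.const_mul c)
        simpa [hB, Pi.sub_def] using this
      have heq : -(c * (deriv α t / (2 * Real.sqrt (α t))))
          = ‖deriv x t‖ ^ 2 / (Real.sqrt κ * Real.sqrt (α t)) := by
        rw [hα' t, hc]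
        field_simp
      rw [heq] at hBd
      exact hBd.hasDerivWithinAt
    have bound : ∀ t ∈ Set.Ico s b,
        ‖deriv x t‖ ≤ ‖deriv x t‖ ^ 2 / (Real.sqrt κ * Real.sqrt (α t)) := by
      intro t ht
      have hts : s₀ ≤ t := le_trans hs ht.1
      have hαt : 0 < α t := hpos t hts
      have ha : (0:ℝ) < Real.sqrt κ * Real.sqrt (α t) :=
        mul_pos hκs (Real.sqrt_pos.mpr hαt)
      have h1 : Real.sqrt κ * Real.sqrt (α t) ≤ ‖deriv x t‖ := by
        rw [← Real.sqrt_mul hκ.le]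
        calc Real.sqrt (κ * α t) ≤ Real.sqrt (‖deriv x t‖ ^ 2) :=
              Real.sqrt_le_sqrt (hae t hts)
          _ = ‖deriv x t‖ := by rw [Real.sqrt_sq (norm_nonneg _)]
      rw [le_div_iff₀ ha, sq]
      exact mul_le_mul_of_nonneg_left h1 (norm_nonneg _)
    have hf : ContinuousOn (fun t => x t - x s) (Set.Icc s b) :=
      ((hx.continuous.sub continuous_const).continuousOn)
    have hf' : ∀ t ∈ Set.Ico s b,
        HasDerivWithinAt (fun t => x t - x s) (deriv x t) (Set.Ici t) t := by
      intro t _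
      simpa [Pi.sub_def] using ((hxd t).sub (hasDerivAt_const t (x s))).hasDerivWithinAt
    have hstart : ‖x s - x s‖ ≤ B s := by simp [hB]
    have := image_norm_le_of_norm_deriv_right_le_deriv_boundary' hf hf' hstart
      hBcont hB' bound (Set.right_mem_Icc.mpr hb)
    simpa [hB] using this
  -- take the limit b → ∞
  have h1 : Tendsto (fun b => ‖x b - x s‖) atTop (nhds ‖xplus - x s‖) :=
    ((hconv.sub tendsto_const_nhds).norm)
  have h2 : Tendsto (fun b => c * Real.sqrt (α s) - c * Real.sqrt (α b)) atTop
      (nhds (c * Real.sqrt (α s))) := by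
    have : Tendsto (fun b => Real.sqrt (α b)) atTop (nhds 0) := by
      have := (Real.continuous_sqrt.tendsto 0).comp hα0
      simpa [Function.comp_def] using this
    have h3 : Tendsto (fun b => c * Real.sqrt (α s) - c * Real.sqrt (α b)) atTop
        (nhds (c * Real.sqrt (α s) - c * 0)) :=
      tendsto_const_nhds.sub (this.const_mul c)
    simpa using h3
  exact le_of_tendsto_of_tendsto h1 h2 ((eventually_ge_atTop s).mono key)
end

section
/- Let H be a real Hilbert space, let x : ℝ → H be continuously differentiable, let α : ℝ → ℝ be differentiable with α'(t) = −‖x'(t)‖² for all t, and let κ > 0 and s₀ ∈ ℝ. Assume α(t) > 0 and ‖x'(t)‖² ≥ κ·α(t) for all t ≥ s₀, that x(t) converges to a point x⁺ ∈ H as t → ∞, and that α(t) → 0 as t → ∞. Then for every s ≥ s₀ one has ‖x⁺ − x(s)‖ ≤ (2/√κ)·√(α(s₀))·e^(−(κ/2)(s−s₀)). -/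
open Filter

/-- Level-zero exponential decay: under the action-energy inequality
`‖x'‖² ≥ κ α` and `α' = −‖x'‖²`, the curve converges exponentially fast to
its asymptotic limit with rate `κ/2`. -/
theorem exponential_decay_level_zero
    {H : Type*} [NormedAddCommGroup H] [InnerProductSpace ℝ H] [CompleteSpace H]
    (x : ℝ → H) (hx : ContDiff ℝ 1 x)
    (α : ℝ → ℝ) (hα : Differentiable ℝ α)
    (hα' : ∀ t, deriv α t = -‖deriv x t‖ ^ 2)
    (κ : ℝ) (hκ : 0 < κ) (s₀ : ℝ)
    (hpos : ∀ t ≥ s₀, 0 < α t)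
    (hae : ∀ t ≥ s₀, κ * α t ≤ ‖deriv x t‖ ^ 2)
    (xplus : H) (hconv : Tendsto x atTop (nhds xplus))
    (hα0 : Tendsto α atTop (nhds 0)) :
    ∀ s ≥ s₀, ‖xplus - x s‖ ≤
      (2 / Real.sqrt κ) * Real.sqrt (α s₀) * Real.exp (-(κ / 2) * (s - s₀)) := by
  have hxd : Differentiable ℝ x := hx.differentiable one_ne_zero
  have hsκ : 0 < Real.sqrt κ := Real.sqrt_pos.mpr hκ
  set c : ℝ := 2 / Real.sqrt κ with hc_def
  have hc : 0 ≤ c := div_nonneg (by norm_num) hsκ.le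
  -- Step 1: Gronwall-type decay of α
  have hdecay : ∀ s ≥ s₀, α s ≤ α s₀ * Real.exp (-(κ * (s - s₀))) := by
    intro s hs
    set g : ℝ → ℝ := fun t => α t * Real.exp (κ * (t - s₀)) with hg
    have hgd : ∀ t, HasDerivAt g ((deriv α t + κ * α t) * Real.exp (κ * (t - s₀))) t := by
      intro t
      have h1 : HasDerivAt (fun t => Real.exp (κ * (t - s₀)))
          (Real.exp (κ * (t - s₀)) * (κ * 1)) t :=
        (((hasDerivAt_id t).sub_const s₀).const_mul κ).exp
      have h2 := ((hα t).hasDerivAt).mul h1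
      refine h2.congr_deriv ?_
      ring
    have hanti : AntitoneOn g (Set.Ici s₀) := by
      apply antitoneOn_of_deriv_nonpos (convex_Ici s₀)
      · exact fun t _ => (hgd t).continuousAt.continuousWithinAt
      · exact fun t _ => (hgd t).differentiableAt.differentiableWithinAt
      · intro t ht
        rw [interior_Ici] at ht
        rw [(hgd t).deriv]
        have h0 : deriv α t + κ * α t ≤ 0 := by
          rw [hα' t]
          have := hae t ht.le
          linarith
        exact mul_nonpos_iff.mpr (Or.inr ⟨h0, (Real.exp_pos _).le⟩)
    have hgs : g s ≤ g s₀ := hanti Set.self_mem_Ici hs hs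
    have hg0 : g s₀ = α s₀ := by simp [hg]
    rw [hg0] at hgs
    have := mul_le_mul_of_nonneg_right hgs (Real.exp_nonneg (-(κ * (s - s₀))))
    calc α s = g s * Real.exp (-(κ * (s - s₀))) := by
              rw [hg]; simp only []
              rw [mul_assoc, ← Real.exp_add]
              simp
      _ ≤ α s₀ * Real.exp (-(κ * (s - s₀))) := this
  -- Step 2: distance estimate
  intro s hs
  -- the bound function and its derivative
  have hBd : ∀ t ≥ s₀, HasDerivAt (fun t => c * Real.sqrt (α t))
      (c * (deriv α t / (2 * Real.sqrt (α t)))) t := by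
    intro t ht
    exact ((hα t).hasDerivAt.sqrt (hpos t ht).ne').const_mul c
  have key : ∀ T, s ≤ T → ‖x T - x s‖ ≤ c * Real.sqrt (α s) - c * Real.sqrt (α T) := by
    intro T hT
    have main := image_norm_le_of_norm_deriv_right_le_deriv_boundary'
      (f := fun t => x t - x s) (f' := fun t => deriv x t) (a := s) (b := T)
      (B := fun t => c * Real.sqrt (α s) - c * Real.sqrt (α t))
      (B' := fun t => -(c * (deriv α t / (2 * Real.sqrt (α t)))))
      (by exact (hxd.continuous.continuousOn).sub continuousOn_const)
      (fun t _ => by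
        simpa using (((hxd t).hasDerivAt).sub_const (x s)).hasDerivWithinAt)
      (by simp)
      (continuousOn_const.sub ((Real.continuous_sqrt.comp hα.continuous).continuousOn.const_smul c))
      (fun t ht => by
        have htge : s₀ ≤ t := le_trans hs ht.1
        have h := ((hasDerivAt_const t (c * Real.sqrt (α s))).sub (hBd t htge)).hasDerivWithinAt (s := Set.Ici t)
        rw [zero_sub] at h
        exact h)
      ?_
    · exact main (Set.right_mem_Icc.mpr hT)
    · intro t ht
      have htge : s₀ ≤ t := le_trans hs ht.1
      have hat : 0 < α t := hpos t htge
      have hsa : 0 < Real.sqrt (α t) := Real.sqrt_pos.mpr hat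
      rw [hα' t]
      set n := ‖deriv x t‖ with hn
      have hn0 : 0 ≤ n := norm_nonneg _
      have hκα : κ * α t ≤ n ^ 2 := hae t htge
      have hsqrt : Real.sqrt κ * Real.sqrt (α t) ≤ n := by
        rw [← Real.sqrt_mul hκ.le]
        calc Real.sqrt (κ * α t) ≤ Real.sqrt (n ^ 2) := Real.sqrt_le_sqrt hκα
          _ = n := by rw [Real.sqrt_sq hn0]
      -- goal: n ≤ -(c * (-n^2 / (2 * √(α t))))
      have hgoal : n ≤ c * (n ^ 2 / (2 * Real.sqrt (α t))) := by
        rw [hc_def, div_mul_eq_mul_div, mul_div_assoc', le_div_iff₀ hsκ,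
          le_div_iff₀ (by positivity : (0:ℝ) < 2 * Real.sqrt (α t))]
        have h2 : Real.sqrt κ * Real.sqrt (α t) * n ≤ n * n :=
          mul_le_mul_of_nonneg_right hsqrt hn0
        nlinarith
      calc n ≤ c * (n ^ 2 / (2 * Real.sqrt (α t))) := hgoal
        _ = -(c * (-n ^ 2 / (2 * Real.sqrt (α t)))) := by ring
  -- Step 3: pass to the limit T → ∞
  have hlim1 : Tendsto (fun T => ‖x T - x s‖) atTop (nhds ‖xplus - x s‖) :=
    ((hconv.sub tendsto_const_nhds).norm)
  have hlim2 : Tendsto (fun T => c * Real.sqrt (α s) - c * Real.sqrt (α T)) atTop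
      (nhds (c * Real.sqrt (α s))) := by
    have : Tendsto (fun T => Real.sqrt (α T)) atTop (nhds 0) := by
      have := (Real.continuous_sqrt.tendsto 0).comp hα0
      simpa [Function.comp_def] using this
    have h3 : Tendsto (fun T => c * Real.sqrt (α T)) atTop (nhds 0) := by
      simpa using this.const_mul c
    have h4 := (tendsto_const_nhds (α := ℝ) (f := atTop)
      (x := c * Real.sqrt (α s))).sub h3
    simpa using h4
  have hmain : ‖xplus - x s‖ ≤ c * Real.sqrt (α s) := by
    refine le_of_tendsto_of_tendsto hlim1 hlim2 ?_
    filter_upwards [eventually_ge_atTop s] with T hT using key T hT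
  -- Step 4: conclude using decay of α
  have hαs : Real.sqrt (α s) ≤ Real.sqrt (α s₀) * Real.exp (-(κ / 2) * (s - s₀)) := by
    calc Real.sqrt (α s) ≤ Real.sqrt (α s₀ * Real.exp (-(κ * (s - s₀)))) :=
          Real.sqrt_le_sqrt (hdecay s hs)
      _ = Real.sqrt (α s₀) * Real.sqrt (Real.exp (-(κ * (s - s₀)))) :=
          Real.sqrt_mul (hpos s₀ le_rfl).le _
      _ = Real.sqrt (α s₀) * Real.exp (-(κ * (s - s₀)) / 2) := by
          rw [Real.exp_half]
      _ = Real.sqrt (α s₀) * Real.exp (-(κ / 2) * (s - s₀)) := by ring_nf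
  calc ‖xplus - x s‖ ≤ c * Real.sqrt (α s) := hmain
    _ ≤ c * (Real.sqrt (α s₀) * Real.exp (-(κ / 2) * (s - s₀))) :=
        mul_le_mul_of_nonneg_left hαs hc
    _ = 2 / Real.sqrt κ * Real.sqrt (α s₀) * Real.exp (-(κ / 2) * (s - s₀)) := by
        rw [hc_def]; ring
end

section
/- Let n ≥ 1 be a natural number and let c < 0 be a real constant. Define x : ℝ → ℝ by x(s) = 1/(c·e^(2ns) − (3/2)·n²). Then x is well-defined and differentiable on all of ℝ and satisfies the Bernoulli differential equation x'(s) = −2n·x(s) − 3n³·x(s)² for every s ∈ ℝ. Moreover x(s) → 0 as s → +∞ and x(s) → −2/(3n²) as s → −∞, with the exponential bounds |x(s)| ≤ (1/|c|)·e^(−2ns) and |x(s) + 2/(3n²)| ≤ (4|c|/(9n⁴))·e^(2ns) for all s ∈ ℝ. -/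
open Filter

/-- The explicit solution of the Bernoulli ODE `x' = −2n x − 3n³ x²` given by
`x(s) = 1/(c e^{2ns} − (3/2)n²)` with `c < 0` is globally defined, solves the
equation, and converges exponentially fast to `0` at `+∞` and to `−2/(3n²)`
at `−∞`. -/
theorem bernoulli_heteroclinic
    (n : ℕ) (hn : 1 ≤ n) (c : ℝ) (hc : c < 0)
    (x : ℝ → ℝ)
    (hxdef : ∀ s, x s = 1 / (c * Real.exp (2 * n * s) - 3 / 2 * (n : ℝ) ^ 2)) :
    (∀ s, c * Real.exp (2 * n * s) - 3 / 2 * (n : ℝ) ^ 2 ≠ 0) ∧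
    Differentiable ℝ x ∧
    (∀ s, deriv x s = -2 * n * x s - 3 * (n : ℝ) ^ 3 * x s ^ 2) ∧
    Tendsto x atTop (nhds 0) ∧
    Tendsto x atBot (nhds (-2 / (3 * (n : ℝ) ^ 2))) ∧
    (∀ s, |x s| ≤ (1 / |c|) * Real.exp (-2 * n * s)) ∧
    (∀ s, |x s + 2 / (3 * (n : ℝ) ^ 2)| ≤
      (4 * |c| / (9 * (n : ℝ) ^ 4)) * Real.exp (2 * n * s)) := by
  have hxeq : x = fun s => 1 / (c * Real.exp (2 * n * s) - 3 / 2 * (n : ℝ) ^ 2) :=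
    funext hxdef
  have hn1 : (1 : ℝ) ≤ (n : ℝ) := by exact_mod_cast hn
  have hn0 : (0 : ℝ) < (n : ℝ) := by linarith
  have hnsq : (0 : ℝ) < (n : ℝ) ^ 2 := by positivity
  have hdneg : ∀ s : ℝ, c * Real.exp (2 * n * s) - 3 / 2 * (n : ℝ) ^ 2 < 0 := by
    intro s
    have he : 0 < Real.exp (2 * n * s) := Real.exp_pos _
    nlinarith [mul_pos (neg_pos.2 hc) he]
  have hdne : ∀ s : ℝ, c * Real.exp (2 * n * s) - 3 / 2 * (n : ℝ) ^ 2 ≠ 0 :=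
    fun s => (hdneg s).ne
  -- differentiability of the denominator
  have hdd : ∀ s : ℝ, HasDerivAt (fun s : ℝ => c * Real.exp (2 * n * s) - 3 / 2 * (n : ℝ) ^ 2)
      (c * (2 * n * Real.exp (2 * n * s))) s := by
    intro s
    have h1 : HasDerivAt (fun s : ℝ => (2 * (n : ℝ)) * s) (2 * n) s := by
      simpa using (hasDerivAt_id s).const_mul (2 * (n : ℝ))
    have h2 : HasDerivAt (fun s : ℝ => Real.exp (2 * n * s)) (Real.exp (2 * n * s) * (2 * n)) s :=
      (Real.hasDerivAt_exp _).comp s h1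
    have h3 := (h2.const_mul c).sub_const (3 / 2 * (n : ℝ) ^ 2)
    rw [show c * (2 * n * Real.exp (2 * n * s)) = c * (Real.exp (2 * n * s) * (2 * n)) by ring]
    exact h3
  have hxderiv : ∀ s : ℝ, HasDerivAt x
      (-(c * (2 * n * Real.exp (2 * n * s))) /
        (c * Real.exp (2 * n * s) - 3 / 2 * (n : ℝ) ^ 2) ^ 2) s := by
    intro s
    rw [hxeq]
    simp only [one_div]
    exact (hdd s).inv (hdne s)
  have hdiff : Differentiable ℝ x := fun s => (hxderiv s).differentiableAt
  have h3n : (0 : ℝ) < 3 * (n : ℝ) ^ 2 := by nlinarith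
  refine ⟨hdne, hdiff, ?_, ?_, ?_, ?_, ?_⟩
  · intro s
    rw [(hxderiv s).deriv, hxdef s]
    have hd := hdne s
    set d := c * Real.exp (2 * n * s) - 3 / 2 * (n : ℝ) ^ 2 with hdDef
    rw [div_pow, one_pow, one_div, one_div, div_eq_iff (pow_ne_zero 2 hd)]
    have h1 : d⁻¹ * d = 1 := inv_mul_cancel₀ hd
    have h2 : ((d ^ 2)⁻¹) * d ^ 2 = 1 := inv_mul_cancel₀ (pow_ne_zero 2 hd)
    symm
    calc (-2 * (n : ℝ) * d⁻¹ - 3 * (n : ℝ) ^ 3 * (d ^ 2)⁻¹) * d ^ 2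
        = -2 * n * (d⁻¹ * d) * d - 3 * (n : ℝ) ^ 3 * ((d ^ 2)⁻¹ * d ^ 2) := by ring
      _ = -2 * n * d - 3 * (n : ℝ) ^ 3 := by rw [h1, h2]; ring
      _ = -(c * (2 * n * Real.exp (2 * n * s))) := by rw [hdDef]; ring
  · -- tendsto atTop to 0
    rw [hxeq]
    have hexp : Tendsto (fun s : ℝ => Real.exp (2 * n * s)) atTop atTop :=
      Real.tendsto_exp_atTop.comp (tendsto_id.const_mul_atTop (by positivity))
    have h1 : Tendsto (fun s : ℝ => c * Real.exp (2 * n * s) - 3 / 2 * (n : ℝ) ^ 2)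
        atTop atBot := by
      have h2 : Tendsto (fun s : ℝ => c * Real.exp (2 * n * s)) atTop atBot := by
        simpa [mul_comm] using hexp.atTop_mul_const_of_neg hc
      simpa [sub_eq_add_neg] using tendsto_atBot_add_const_right atTop
        (-(3 / 2 * (n : ℝ) ^ 2)) h2
    have h3 : Tendsto (fun s : ℝ => -(c * Real.exp (2 * n * s) - 3 / 2 * (n : ℝ) ^ 2))
        atTop atTop := tendsto_neg_atBot_atTop.comp h1
    have h4 := h3.inv_tendsto_atTop
    have h5 : Tendsto (fun s : ℝ =>
        -((-(c * Real.exp (2 * n * s) - 3 / 2 * (n : ℝ) ^ 2))⁻¹)) atTop (nhds (-0)) :=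
      h4.neg
    simp only [one_div]
    refine h5.congr (fun s => by rw [inv_neg, neg_neg]) |>.mono_right ?_
    simp
  · -- tendsto atBot
    rw [hxeq]
    have hexp : Tendsto (fun s : ℝ => Real.exp (2 * n * s)) atBot (nhds 0) :=
      Real.tendsto_exp_atBot.comp (tendsto_id.const_mul_atBot (by positivity))
    have h1 : Tendsto (fun s : ℝ => c * Real.exp (2 * n * s) - 3 / 2 * (n : ℝ) ^ 2)
        atBot (nhds (c * 0 - 3 / 2 * (n : ℝ) ^ 2)) :=
      (hexp.const_mul c).sub_const _
    have h2 := h1.inv₀ (by nlinarith)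
    have heq : (c * 0 - 3 / 2 * (n : ℝ) ^ 2)⁻¹ = -2 / (3 * (n : ℝ) ^ 2) := by
      have hne : (n : ℝ) ≠ 0 := hn0.ne'
      field_simp
      ring
    rw [← heq]
    simpa [one_div] using h2
  · -- first bound
    intro s
    rw [hxdef s]
    set d := c * Real.exp (2 * n * s) - 3 / 2 * (n : ℝ) ^ 2 with hdDef
    have hd := hdneg s
    rw [← hdDef] at hd
    have he : 0 < Real.exp (2 * n * s) := Real.exp_pos _
    have h1 : |1 / d| = 1 / (-d) := by
      rw [abs_div, abs_one, abs_of_neg hd]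
    have hR : (1 / |c|) * Real.exp (-2 * n * s) = 1 / ((-c) * Real.exp (2 * n * s)) := by
      rw [abs_of_neg hc, show (-2 : ℝ) * n * s = -(2 * n * s) by ring, Real.exp_neg]
      field_simp
    rw [h1, hR]
    apply one_div_le_one_div_of_le (mul_pos (neg_pos.2 hc) he)
    rw [hdDef]
    nlinarith
  · -- second bound
    intro s
    rw [hxdef s]
    set e := Real.exp (2 * n * s) with heDef
    have he : 0 < e := Real.exp_pos _
    have hd := hdneg s
    rw [← heDef] at hd
    have key : 1 / (c * e - 3 / 2 * (n : ℝ) ^ 2) + 2 / (3 * (n : ℝ) ^ 2)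
        = 2 * c * e / (3 * (n : ℝ) ^ 2 * (c * e - 3 / 2 * (n : ℝ) ^ 2)) := by
      rw [div_add_div _ _ hd.ne h3n.ne',
        div_eq_div_iff (mul_ne_zero hd.ne h3n.ne') (mul_ne_zero h3n.ne' hd.ne)]
      ring
    rw [key, abs_div]
    have habs1 : |2 * c * e| = 2 * (-c) * e := by
      rw [abs_of_nonpos (by nlinarith)]; ring
    have habs2 : |3 * (n : ℝ) ^ 2 * (c * e - 3 / 2 * (n : ℝ) ^ 2)|
        = 3 * (n : ℝ) ^ 2 * (-(c * e - 3 / 2 * (n : ℝ) ^ 2)) := by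
      rw [abs_of_nonpos (by nlinarith)]; ring
    rw [habs1, habs2, abs_of_neg hc]
    have hstep : 2 * (-c) * e / (3 * (n : ℝ) ^ 2 * (-(c * e - 3 / 2 * (n : ℝ) ^ 2)))
        ≤ 2 * (-c) * e / (3 * (n : ℝ) ^ 2 * (3 / 2 * (n : ℝ) ^ 2)) := by
      have hge : 3 / 2 * (n : ℝ) ^ 2 ≤ -(c * e - 3 / 2 * (n : ℝ) ^ 2) := by nlinarith
      exact div_le_div_of_nonneg_left (by nlinarith) (by nlinarith)
        (mul_le_mul_of_nonneg_left hge h3n.le)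
    refine hstep.trans (le_of_eq ?_)
    have hne : (n : ℝ) ≠ 0 := hn0.ne'
    field_simp
    ring
end

section
/- Let H be a real normed vector space, let x : ℝ → H be twice continuously differentiable, let T ∈ ℝ and ε > 0, and assume ‖x''(s)‖ ≤ ε for all s ≥ T. Set μ := ‖x'(T)‖. Then ‖x'(t)‖ ≥ μ/2 for every t ∈ [T, T + μ/(2ε)], and consequently ∫_T^(T+μ/(2ε)) ‖x'(s)‖² ds ≥ μ³/(8ε). -/
open Set

/-- A uniform bound `ε` on `‖x''‖` prevents `‖x'‖` from dropping below half
its initial value `μ = ‖x'(T)‖` on `[T, T + μ/(2ε)]`, whence the integral of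
`‖x'‖²` over this interval is at least `μ³/(8ε)`. -/
theorem second_derivative_bound_keeps_speed
    {H : Type*} [NormedAddCommGroup H] [NormedSpace ℝ H]
    (x : ℝ → H) (hx : ContDiff ℝ 2 x)
    (T ε : ℝ) (hε : 0 < ε)
    (hsecond : ∀ s ≥ T, ‖deriv (deriv x) s‖ ≤ ε) :
    (∀ t ∈ Icc T (T + ‖deriv x T‖ / (2 * ε)),
      ‖deriv x T‖ / 2 ≤ ‖deriv x t‖) ∧
    ‖deriv x T‖ ^ 3 / (8 * ε) ≤
      ∫ s in T..(T + ‖deriv x T‖ / (2 * ε)), ‖deriv x s‖ ^ 2 := by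
  set μ := ‖deriv x T‖ with hμ
  have hμ0 : 0 ≤ μ := norm_nonneg _
  have hx1 : ContDiff ℝ 1 (deriv x) := by
    have := (contDiff_succ_iff_deriv (n := 1)).mp (by norm_num at hx ⊢; exact hx)
    exact this.2.2
  have hdiff : Differentiable ℝ (deriv x) := hx1.differentiable one_ne_zero
  set b := T + μ / (2 * ε) with hb
  have hTb : T ≤ b := by
    have h : 0 ≤ μ / (2 * ε) := by positivity
    rw [hb]; linarith
  -- pointwise bound
  have key : ∀ t ∈ Icc T b, μ / 2 ≤ ‖deriv x t‖ := by
    intro t ht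
    have hmv : ‖deriv x t - deriv x T‖ ≤ ε * (t - T) := by
      have := norm_image_sub_le_of_norm_deriv_le_segment'
        (f := deriv x) (f' := deriv (deriv x)) (a := T) (b := b)
        (fun s hs => (hdiff s).hasDerivAt.hasDerivWithinAt)
        (fun s hs => hsecond s hs.1) t ht
      exact this
    have h1 : ε * (t - T) ≤ μ / 2 := by
      have ht2 : t - T ≤ μ / (2 * ε) := by
        have := ht.2; rw [hb] at this; linarith
      calc ε * (t - T) ≤ ε * (μ / (2 * ε)) := by nlinarith
        _ = μ / 2 := by field_simp
    have h2 : μ - ‖deriv x t‖ ≤ ‖deriv x t - deriv x T‖ := by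
      have := norm_sub_norm_le (deriv x T) (deriv x t)
      rw [norm_sub_rev] at this
      linarith
    linarith
  refine ⟨key, ?_⟩
  have hcont : Continuous (deriv x) := hx1.continuous
  have hint : IntervalIntegrable (fun s => ‖deriv x s‖ ^ 2) MeasureTheory.volume T b :=
    (hcont.norm.pow 2).intervalIntegrable T b
  have hlow : (∫ s in T..b, (μ / 2) ^ 2) ≤ ∫ s in T..b, ‖deriv x s‖ ^ 2 := by
    apply intervalIntegral.integral_mono_on hTb (intervalIntegrable_const) hint
    intro s hs
    have := key s hs
    nlinarith [norm_nonneg (deriv x s)]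
  have heq : (∫ s in T..b, (μ / 2) ^ 2) = μ ^ 3 / (8 * ε) := by
    rw [intervalIntegral.integral_const, smul_eq_mul, hb]
    field_simp
    ring
  linarith [heq ▸ hlow]
end
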